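/- arXiv:0807.0167 — 4 statements merged into one kernel-verified Lean document; each statement's English description precedes it below -/
import Mathlib

section
/- If G is a finite Frobenius group with abelian Frobenius complement, then G is a Camina group. -/
open Pointwise
open scoped commutatorElement

def IsCamina (G : Type*) [Group G] : Prop :=
  (¬ ∀ a b : G, a * b = b * a) ∧
    ∀ g : G, g ∉ commutator G →
      {x : G | IsConj g x} = (fun c => g * c) '' (commutator G : Set G)

/-- Key surjectivity lemma: if `g` commutes with no nontrivial element of the finite
normal subgroup `K`, then every element of `K` is of the form `g⁻¹ * c⁻¹ * g * c` with `c ∈ K`. -/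
lemma frob_key {G : Type*} [Group G] [Finite G] (K : Subgroup G) (hKn : K.Normal) (g : G)
    (hg : ∀ x ∈ K, g * x = x * g → x = 1) {k : G} (hk : k ∈ K) :
    ∃ c ∈ K, g⁻¹ * c⁻¹ * g * c = k := by
  let f : K → K := fun c =>
    ⟨g⁻¹ * (c : G)⁻¹ * g * c, by
      have h1 : g⁻¹ * (c : G)⁻¹ * g ∈ K := by
        simpa using hKn.conj_mem _ (K.inv_mem c.2) g⁻¹
      exact K.mul_mem h1 c.2⟩
  have hinj : Function.Injective f := by
    intro c1 c2 h
    have h' : g⁻¹ * ((c1 : G)⁻¹ * (g * c1)) = g⁻¹ * ((c2 : G)⁻¹ * (g * c2)) := by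
      have := congrArg Subtype.val h
      simpa [f, mul_assoc] using this
    have e1 : (c1 : G)⁻¹ * (g * c1) = (c2 : G)⁻¹ * (g * c2) := mul_left_cancel h'
    have key : g * ((c2 : G) * (c1 : G)⁻¹) = ((c2 : G) * (c1 : G)⁻¹) * g := by
      calc g * ((c2 : G) * (c1 : G)⁻¹)
          = (c2 : G) * ((c2 : G)⁻¹ * (g * c2) * (c1 : G)⁻¹) := by group
        _ = (c2 : G) * ((c1 : G)⁻¹ * (g * c1) * (c1 : G)⁻¹) := by rw [e1]
        _ = ((c2 : G) * (c1 : G)⁻¹) * g := by group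
    have hx1 : ((c2 : G) * (c1 : G)⁻¹) = 1 :=
      hg _ (K.mul_mem c2.2 (K.inv_mem c1.2)) key
    have : (c2 : G) = (c1 : G) := by
      have := mul_inv_eq_one.mp hx1
      exact this
    exact (Subtype.ext this).symm
  have hsurj := Finite.injective_iff_surjective.mp hinj
  obtain ⟨c, hc⟩ := hsurj ⟨k, hk⟩
  exact ⟨c, c.2, congrArg Subtype.val hc⟩

/-- A finite Frobenius group (kernel `K`, complement `H`) with abelian Frobenius
complement is a Camina group. -/
theorem frobenius_abelian_complement_isCamina (G : Type*) [Group G] [Fintype G]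
    (K H : Subgroup G) (hKn : K.Normal) (hKbot : K ≠ ⊥) (hHbot : H ≠ ⊥)
    (hmeet : K ⊓ H = ⊥) (hjoin : K ⊔ H = ⊤)
    (hcent : ∀ k ∈ K, k ≠ 1 → Subgroup.centralizer {k} ≤ K)
    (hab : ∀ a b : H, a * b = b * a) :
    IsCamina G := by
  haveI := hKn
  -- basic consequences
  have hdisj : ∀ x : G, x ∈ K → x ∈ H → x = 1 := by
    intro x hxK hxH
    have : x ∈ K ⊓ H := ⟨hxK, hxH⟩
    rw [hmeet] at this
    simpa using this
  have hHcond : ∀ h ∈ H, h ≠ 1 → ∀ x ∈ K, h * x = x * h → x = 1 := by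
    intro h hH hne x hxK hcomm
    by_contra hx1
    have : h ∈ K := hcent x hxK hx1 (Subgroup.mem_centralizer_singleton_iff.mpr hcomm)
    exact hne (hdisj h this hH)
  have hgcond : ∀ g : G, g ∉ K → ∀ x ∈ K, g * x = x * g → x = 1 := by
    intro g hgK x hxK hcomm
    by_contra hx1
    exact hgK (hcent x hxK hx1 (Subgroup.mem_centralizer_singleton_iff.mpr hcomm))
  obtain ⟨k0, hk0⟩ := Subgroup.ne_bot_iff_exists_ne_one.mp hKbot
  obtain ⟨h0, hh0⟩ := Subgroup.ne_bot_iff_exists_ne_one.mp hHbot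
  have hk0ne : (k0 : G) ≠ 1 := fun h => hk0 (Subtype.ext h)
  have hh0ne : (h0 : G) ≠ 1 := fun h => hh0 (Subtype.ext h)
  -- commutator G = K
  have hcommK : commutator G = K := by
    apply le_antisymm
    · -- commutator ≤ K since G/K is abelian
      have hqc : ∀ a b : G ⧸ K, a * b = b * a := by
        have hrep : ∀ a : G ⧸ K, ∃ h ∈ H, a = ((h : G) : G ⧸ K) := by
          intro a
          refine QuotientGroup.induction_on a ?_
          intro z
          have hz : z ∈ ((K : Set G) * (H : Set G)) := by
            rw [← Subgroup.normal_mul K H, hjoin]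
            exact Subgroup.mem_top z
          obtain ⟨k, hkK, h, hhH, rfl⟩ := hz
          refine ⟨h, hhH, ?_⟩
          have : ((k : G) : G ⧸ K) = 1 := (QuotientGroup.eq_one_iff k).mpr hkK
          show ((k * h : G) : G ⧸ K) = _
          rw [QuotientGroup.mk_mul, this, one_mul]
        intro a b
        obtain ⟨h1, hh1, rfl⟩ := hrep a
        obtain ⟨h2, hh2, rfl⟩ := hrep b
        have : (h1 : G) * h2 = (h2 : G) * h1 := by
          have := hab ⟨h1, hh1⟩ ⟨h2, hh2⟩
          exact congrArg Subtype.val this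
        rw [← QuotientGroup.mk_mul, ← QuotientGroup.mk_mul, this]
      rw [commutator_def, Subgroup.commutator_le]
      intro g1 _ g2 _
      rw [← QuotientGroup.eq_one_iff]
      have := hqc ((g1 : G) : G ⧸ K) ((g2 : G) : G ⧸ K)
      show ((g1 * g2 * g1⁻¹ * g2⁻¹ : G) : G ⧸ K) = 1
      simp only [QuotientGroup.mk_mul, QuotientGroup.mk_inv]
      rw [this]
      group
    · -- K ≤ commutator
      intro k hkK
      obtain ⟨c, hcK, hc⟩ := frob_key K hKn (h0 : G) (hHcond h0 h0.2 hh0ne) hkK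
      have : k = ⁅(h0 : G)⁻¹, c⁻¹⁆ := by
        rw [← hc]; group
      rw [this, commutator_def]
      exact Subgroup.commutator_mem_commutator (Subgroup.mem_top _) (Subgroup.mem_top _)
  constructor
  · -- nonabelian
    intro hcontra
    exact hk0ne (hHcond h0 h0.2 hh0ne k0 k0.2 (hcontra _ _))
  · intro g hg
    rw [hcommK] at hg ⊢
    ext x
    constructor
    · rintro hx
      obtain ⟨c, hc⟩ := isConj_iff.mp hx
      refine ⟨g⁻¹ * c * g * c⁻¹, ?_, ?_⟩
      · have : g⁻¹ * c * g * c⁻¹ = ⁅g⁻¹, c⁆ := by group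
        rw [SetLike.mem_coe, ← hcommK, this, commutator_def]
        exact Subgroup.commutator_mem_commutator (Subgroup.mem_top _) (Subgroup.mem_top _)
      · show g * (g⁻¹ * c * g * c⁻¹) = x
        rw [← hc]; group
    · rintro ⟨k, hkK, rfl⟩
      obtain ⟨c, hcK, hc⟩ := frob_key K hKn g (hgcond g hg) hkK
      show IsConj g (g * k)
      rw [isConj_iff]
      refine ⟨c⁻¹, ?_⟩
      rw [← hc]; group
end

section
/- A finite nonabelian group G is a Camina group if and only if every nonlinear irreducible complex character of G vanishes on G \ G'. -/
open CategoryTheory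

open Module

open scoped commutatorElement

set_option linter.unusedSectionVars false

section Aux
variable {G : Type} [Group G]

variable {G : Type} [Group G]

noncomputable def subRep (V : FDRep ℂ G) (p : Submodule ℂ V) (hp : ∀ g : G, ∀ x ∈ p, V.ρ g x ∈ p) :
    Representation ℂ G p where
  toFun g := (V.ρ g).restrict (hp g)
  map_one' := by ext x; simp [LinearMap.restrict_apply]
  map_mul' g h := by ext x; simp [LinearMap.restrict_apply]

noncomputable def subRepIncl (V : FDRep ℂ G) (p : Submodule ℂ V)
    (hp : ∀ g : G, ∀ x ∈ p, V.ρ g x ∈ p) : FDRep.of (subRep V p hp) ⟶ V where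
  hom := ConcreteCategory.ofHom p.subtype
  comm g := by ext x; rfl

theorem nontrivial_of_simple (V : FDRep ℂ G) [Simple V] : Nontrivial (V : Type) := by
  by_contra h
  have hs : Subsingleton (↑V.V.obj) := not_nontrivial_iff_subsingleton.mp h
  apply id_nonzero V
  apply Action.hom_ext
  apply FGModuleCat.hom_ext
  apply LinearMap.ext
  intro x
  exact @Subsingleton.elim _ hs _ _

theorem simple_of_invariant {W : Type} [AddCommGroup W] [Module ℂ W] [FiniteDimensional ℂ W]
    [Nontrivial W] (ρ : Representation ℂ G W)
    (h : ∀ p : Submodule ℂ W, (∀ (g : G) (x : W), x ∈ p → ρ g x ∈ p) → p = ⊥ ∨ p = ⊤) :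
    Simple (FDRep.of ρ) := by
  apply Simple.mk
  intro Y f hmono
  constructor
  · rintro hiso rfl
    obtain ⟨w, hw⟩ := exists_ne (0 : W)
    apply hw
    have h1 : (𝟙 (FDRep.of ρ)) = (0 : FDRep.of ρ ⟶ FDRep.of ρ) := by
      rw [← IsIso.inv_hom_id (0 : Y ⟶ FDRep.of ρ), Limits.comp_zero]
    have := congrFun (congrArg (fun (φ : FDRep.of ρ ⟶ FDRep.of ρ) => DFunLike.coe (Action.Hom.hom φ).hom.hom) h1) w
    simpa using this
  · intro hfne
    have hcomm : ∀ (g : G) (y : ↑Y.V.obj), f.hom (Y.ρ g y) = ρ g (f.hom y) := by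
      intro g y
      exact congrFun (congrArg (fun φ => DFunLike.coe φ.hom.hom) (f.comm g)) y
    have hRinv : ∀ (g : G) (x : W), x ∈ LinearMap.range f.hom.hom.hom → ρ g x ∈ LinearMap.range f.hom.hom.hom := by
      rintro g x ⟨y, rfl⟩
      exact ⟨Y.ρ g y, hcomm g y⟩
    have hR : LinearMap.range f.hom.hom.hom = ⊤ := by
      rcases h (LinearMap.range f.hom.hom.hom) hRinv with hbot | htop
      · exfalso
        apply hfne
        apply Action.hom_ext
        apply FGModuleCat.hom_ext
        apply LinearMap.ext
        intro y
        have : f.hom y ∈ LinearMap.range f.hom.hom.hom := LinearMap.mem_range_self _ y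
        rw [hbot] at this
        exact (Submodule.mem_bot ℂ).mp this
      · exact htop
    have hK : LinearMap.ker f.hom.hom.hom = ⊥ := by
      by_contra hKne
      have hKinv : ∀ g : G, ∀ x ∈ LinearMap.ker f.hom.hom.hom, Y.ρ g x ∈ LinearMap.ker f.hom.hom.hom := by
        intro g x hx
        have hx' : f.hom x = 0 := hx
        show f.hom (Y.ρ g x) = 0
        rw [hcomm g x, hx', map_zero]
      have hz : subRepIncl Y _ hKinv ≫ f = (0 : FDRep.of (subRep Y _ hKinv) ⟶ Y) ≫ f := by
        apply Action.hom_ext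
        apply FGModuleCat.hom_ext
        apply LinearMap.ext
        intro x
        show f.hom ((subRepIncl Y _ hKinv).hom x) = f.hom ((0 : FDRep.of (subRep Y _ hKinv) ⟶ Y).hom x)
        have h2 : (0 : FDRep.of (subRep Y _ hKinv) ⟶ Y).hom x = 0 := rfl
        rw [h2, map_zero]
        exact x.2
      have hcancel := hmono.right_cancellation _ _ hz
      obtain ⟨x, hx⟩ := Submodule.exists_mem_ne_zero_of_ne_bot hKne
      apply hx.2
      have : (subRepIncl Y _ hKinv).hom ⟨x, hx.1⟩ = (0 : FDRep.of (subRep Y _ hKinv) ⟶ Y).hom ⟨x, hx.1⟩ := by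
        rw [hcancel]
      have h0 : (0 : FDRep.of (subRep Y _ hKinv) ⟶ Y).hom ⟨x, hx.1⟩ = 0 := rfl
      rw [h0] at this
      simpa [subRepIncl] using this
    have hbij : Function.Bijective f.hom.hom.hom :=
      ⟨LinearMap.ker_eq_bot.mp hK, LinearMap.range_eq_top.mp hR⟩
    let e := LinearEquiv.ofBijective f.hom.hom.hom hbij
    refine ⟨⟨⟨ConcreteCategory.ofHom e.symm.toLinearMap, ?_⟩, ?_, ?_⟩⟩
    · intro g
      apply FGModuleCat.hom_ext
      apply LinearMap.ext
      intro w
      show e.symm (ρ g w) = Y.ρ g (e.symm w)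
      apply hbij.1
      show f.hom (e.symm (ρ g w)) = f.hom (Y.ρ g (e.symm w))
      rw [hcomm g (e.symm w)]
      have h1 : f.hom (e.symm (ρ g w)) = e (e.symm (ρ g w)) := rfl
      have h2 : f.hom (e.symm w) = e (e.symm w) := rfl
      rw [h1, h2, e.apply_symm_apply, e.apply_symm_apply]
    · apply Action.hom_ext
      apply FGModuleCat.hom_ext
      apply LinearMap.ext
      intro y
      show e.symm (f.hom y) = y
      exact e.symm_apply_apply y
    · apply Action.hom_ext
      apply FGModuleCat.hom_ext
      apply LinearMap.ext
      intro w
      show f.hom (e.symm w) = w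
      exact e.apply_symm_apply w


theorem invariant_bot_or_top (V : FDRep ℂ G) [Simple V] (p : Submodule ℂ V)
    (hp : ∀ g : G, ∀ x ∈ p, V.ρ g x ∈ p) : p = ⊥ ∨ p = ⊤ := by
  by_cases hbot : p = ⊥
  · exact Or.inl hbot
  right
  have hmono : Mono (subRepIncl V p hp) := by
    have : Mono ((Action.forget _ _).map (subRepIncl V p hp)) := by
      apply ConcreteCategory.mono_of_injective
      exact fun a b h => Subtype.ext h
    exact (Action.forget _ _).mono_of_mono_map this
  have hne : subRepIncl V p hp ≠ 0 := by
    obtain ⟨x, hx⟩ := Submodule.exists_mem_ne_zero_of_ne_bot hbot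
    intro h
    have : (subRepIncl V p hp).hom ⟨x, hx.1⟩ = 0 := by rw [h]; rfl
    exact hx.2 (by simpa [subRepIncl] using this)
  have : IsIso (subRepIncl V p hp) := (Simple.mono_isIso_iff_nonzero _).2 hne
  have h2 := (FDRep.isoToLinearEquiv (asIso (subRepIncl V p hp))).surjective
  rw [eq_top_iff]
  intro v _
  obtain ⟨x, hxv⟩ := h2 v
  have : ((subRepIncl V p hp).hom x : V) = v := hxv
  rw [← this]
  exact x.2


theorem scalar_finrank_one (V : FDRep ℂ G) [Simple V]
    (hcomm : ∀ a b : G, V.ρ a * V.ρ b = V.ρ b * V.ρ a)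
    (ibt : ∀ (p : Submodule ℂ V), (∀ g : G, ∀ x ∈ p, V.ρ g x ∈ p) → p = ⊥ ∨ p = ⊤) :
    finrank ℂ V = 1 := by
  have hnt : Nontrivial ((V : Type)) := nontrivial_of_simple V
  have hscal : ∀ a : G, ∃ μ : ℂ, ∀ v : (V : Type), V.ρ a v = μ • v := by
    intro a
    obtain ⟨μ, hμ⟩ := Module.End.exists_eigenvalue (V.ρ a)
    refine ⟨μ, ?_⟩
    have hE : Module.End.eigenspace (V.ρ a) μ ≠ ⊥ := hμ
    have hinv : ∀ b : G, ∀ x ∈ Module.End.eigenspace (V.ρ a) μ, V.ρ b x ∈ Module.End.eigenspace (V.ρ a) μ := by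
      intro b x hx
      rw [Module.End.mem_eigenspace_iff] at hx ⊢
      have h3 := congrFun (congrArg DFunLike.coe (hcomm a b)) x
      simp only [Module.End.mul_apply] at h3
      rw [h3, hx]
      exact map_smul _ _ _
    rcases ibt (Module.End.eigenspace (V.ρ a) μ) hinv with hbot | htop
    · exact absurd hbot hE
    · intro v
      have hv : v ∈ Module.End.eigenspace (V.ρ a) μ := htop ▸ Submodule.mem_top
      exact Module.End.mem_eigenspace_iff.mp hv
  obtain ⟨v, hv⟩ := exists_ne (0 : (V : Type))
  have hp : ∀ g : G, ∀ x ∈ Submodule.span ℂ {v}, V.ρ g x ∈ Submodule.span ℂ {v} := by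
    intro g x hx
    obtain ⟨μ, hμ⟩ := hscal g
    rw [hμ x]
    exact Submodule.smul_mem _ _ hx
  rcases ibt (Submodule.span ℂ {v}) hp with hbot | htop
  · exfalso
    have hb : v ∈ (⊥ : Submodule ℂ (V : Type)) := hbot ▸ Submodule.mem_span_singleton_self v
    rw [Submodule.mem_bot] at hb
    exact hv hb
  · rw [finrank_eq_one_iff_of_nonzero' v hv]
    intro w
    have hw : w ∈ Submodule.span ℂ {v} := htop ▸ Submodule.mem_top
    exact Submodule.mem_span_singleton.mp hw


theorem forward_vanish [Fintype G]
    (hC : ∀ g : G, g ∉ commutator G →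
      {x : G | IsConj g x} = (fun c => g * c) '' (commutator G : Set G))
    (V : FDRep ℂ G) [Simple V] (hd : finrank ℂ V ≠ 1) (g : G) (hg : g ∉ commutator G) :
    V.character g = 0 := by
  classical
  set N := commutator G with hN
  haveI : Fintype ↥N := Fintype.ofFinite _
  haveI hNorm : N.Normal := by rw [hN, commutator_def]; infer_instance
  set ρ' : Representation ℂ ↥N (V : Type) := V.ρ.comp N.subtype with hρ'
  have hρ'app : ∀ (c : ↥N) (v : (V : Type)), ρ' c v = V.ρ (c : G) v := fun _ _ => rfl
  have hUinv : ∀ h : G, ∀ v ∈ ρ'.invariants, V.ρ h v ∈ ρ'.invariants := by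
    intro h v hv
    rw [Representation.mem_invariants] at hv ⊢
    intro c
    have hc' : h⁻¹ * (c : G) * h ∈ N := by
      have := hNorm.conj_mem (c : G) c.2 h⁻¹
      simpa using this
    rw [hρ'app]
    have e2 : (c : G) * h = h * (h⁻¹ * (c : G) * h) := by group
    have e1 : V.ρ (c : G) (V.ρ h v) = V.ρ ((c : G) * h) v := by rw [map_mul]; rfl
    rw [e1, e2, map_mul]
    have e3 : V.ρ (h⁻¹ * (c : G) * h) v = v := hv ⟨_, hc'⟩
    show V.ρ h (V.ρ (h⁻¹ * (c : G) * h) v) = V.ρ h v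
    rw [e3]
  rcases invariant_bot_or_top V ρ'.invariants hUinv with hbot | htop
  · -- sum of ρ' over N is zero
    have hS : (∑ c : ↥N, V.ρ (c : G)) = 0 := by
      apply LinearMap.ext
      intro v
      have hmem : (∑ c : ↥N, V.ρ (c : G)) v ∈ ρ'.invariants := by
        rw [Representation.mem_invariants]
        intro d
        rw [hρ'app, LinearMap.sum_apply, map_sum]
        refine Fintype.sum_equiv (Equiv.mulLeft d) _ _ ?_
        intro c
        show V.ρ (d : G) (V.ρ (c : G) v) = V.ρ (((Equiv.mulLeft d) c : ↥N) : G) v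
        have h4 : (((Equiv.mulLeft d) c : ↥N) : G) = (d : G) * (c : G) := rfl
        rw [h4, map_mul]
        rfl
      rw [hbot, Submodule.mem_bot] at hmem
      simp [hmem]
    have hcard : ((Fintype.card ↥N : ℂ)) ≠ 0 := by
      exact_mod_cast Fintype.card_ne_zero
    have key : (Fintype.card ↥N : ℂ) * V.character g = 0 := by
      have h1 : ∀ c : ↥N, V.character (g * c) = V.character g := by
        intro c
        have hmem : g * (c : G) ∈ {x : G | IsConj g x} := by
          rw [hC g hg]
          exact ⟨(c : G), c.2, rfl⟩
        obtain ⟨h, hh⟩ := isConj_iff.mp hmem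
        rw [← hh]
        exact FDRep.char_conj V g h
      calc (Fintype.card ↥N : ℂ) * V.character g
          = ∑ _c : ↥N, V.character g := by rw [Finset.sum_const, Finset.card_univ, nsmul_eq_mul]
        _ = ∑ c : ↥N, V.character (g * c) := by rw [Finset.sum_congr rfl (fun c _ => (h1 c).symm)]
        _ = ∑ c : ↥N, LinearMap.trace ℂ _ (V.ρ g * V.ρ (c : G)) := by
              apply Finset.sum_congr rfl
              intro c _
              show LinearMap.trace ℂ _ (V.ρ (g * (c : G))) = _
              rw [map_mul]
        _ = LinearMap.trace ℂ _ (V.ρ g * ∑ c : ↥N, V.ρ (c : G)) := by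
              rw [Finset.mul_sum, map_sum]
        _ = 0 := by rw [hS, mul_zero, map_zero]
    exact (mul_eq_zero.mp key).resolve_left hcard
  · -- invariants = ⊤ : contradiction with finrank ≠ 1
    exfalso
    apply hd
    have htriv : ∀ x ∈ N, V.ρ x = 1 := by
      intro x hx
      apply LinearMap.ext
      intro v
      have hv : v ∈ ρ'.invariants := htop ▸ Submodule.mem_top
      exact (Representation.mem_invariants _ v).mp hv ⟨x, hx⟩
    have hcomm : ∀ a b : G, V.ρ a * V.ρ b = V.ρ b * V.ρ a := by
      intro a b
      have hel : a⁻¹ * b⁻¹ * a * b ∈ N := by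
        have : ⁅a⁻¹, b⁻¹⁆ ∈ ⁅(⊤ : Subgroup G), ⊤⁆ :=
          Subgroup.commutator_mem_commutator (Subgroup.mem_top _) (Subgroup.mem_top _)
        rw [hN, commutator_def]
        simpa [commutatorElement_def, mul_assoc] using this
      have e1 : a * b = (b * a) * (a⁻¹ * b⁻¹ * a * b) := by group
      calc V.ρ a * V.ρ b = V.ρ (a * b) := (map_mul _ _ _).symm
        _ = V.ρ ((b * a) * (a⁻¹ * b⁻¹ * a * b)) := by rw [← e1]
        _ = V.ρ (b * a) * V.ρ (a⁻¹ * b⁻¹ * a * b) := map_mul _ _ _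
        _ = V.ρ (b * a) * 1 := by rw [htriv _ hel]
        _ = V.ρ b * V.ρ a := by rw [mul_one, map_mul]
    exact scalar_finrank_one V hcomm (fun p hp => invariant_bot_or_top V p hp)


theorem trace_mul_of_finrank_one {V : Type} [AddCommGroup V] [Module ℂ V] [FiniteDimensional ℂ V]
    (h : finrank ℂ V = 1) (f g : V →ₗ[ℂ] V) :
    LinearMap.trace ℂ V (f * g) = LinearMap.trace ℂ V f * LinearMap.trace ℂ V g := by
  haveI : Nontrivial V := by
    apply Module.nontrivial_of_finrank_pos (R := ℂ)
    rw [h]; norm_num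
  have hid : (LinearMap.id : V →ₗ[ℂ] V) ≠ 0 := by
    intro h0
    obtain ⟨v, hv⟩ := exists_ne (0 : V)
    apply hv
    have := congrFun (congrArg DFunLike.coe h0) v
    simpa using this
  have hEnd : finrank ℂ (V →ₗ[ℂ] V) = 1 := by
    rw [Module.finrank_linearMap, h]
  have key := (finrank_eq_one_iff_of_nonzero' (LinearMap.id : V →ₗ[ℂ] V) hid).mp hEnd
  obtain ⟨c, hc⟩ := key f
  obtain ⟨d, hd⟩ := key g
  have htr1 : LinearMap.trace ℂ V (LinearMap.id : V →ₗ[ℂ] V) = 1 := by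
    rw [LinearMap.trace_id, h]; norm_num
  have hfg : f * g = (c * d) • (LinearMap.id : V →ₗ[ℂ] V) := by
    rw [← hc, ← hd]
    ext v
    simp [mul_smul, smul_comm c d]
  rw [hfg, ← hc, ← hd, map_smul, map_smul, map_smul, htr1]
  simp [mul_comm]

theorem char_linear_mul (V : FDRep ℂ G) (h : finrank ℂ V = 1) (a b : G) :
    V.character (a * b) = V.character a * V.character b := by
  show LinearMap.trace ℂ _ (V.ρ (a * b)) = _
  rw [map_mul]
  exact trace_mul_of_finrank_one h _ _

theorem char_linear_commutator (V : FDRep ℂ G) (h : finrank ℂ V = 1) (c : G)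
    (hc : c ∈ commutator G) : V.character c = 1 := by
  let χ : G →* ℂ :=
    { toFun := V.character
      map_one' := by rw [FDRep.char_one, h]; norm_num
      map_mul' := char_linear_mul V h }
  have hker := Abelianization.commutator_subset_ker (MonoidHom.toHomUnits χ) hc
  have h1 : (MonoidHom.toHomUnits χ) c = 1 := hker
  have h2 := congrArg (Units.val) h1
  exact (by simpa using h2 : χ c = 1)


instance monAlgFinite [Fintype G] : Module.Finite ℂ (MonoidAlgebra ℂ G) :=
  Module.Finite.equiv ((Finsupp.linearEquivFunOnFinite ℂ ℂ G).symm.trans (MonoidAlgebra.coeffLinearEquiv ℂ).symm)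

section RegRep
variable [Fintype G] (W : Submodule (MonoidAlgebra ℂ G) (MonoidAlgebra ℂ G))

noncomputable instance : Module ℂ ↥W := inferInstance

noncomputable instance : FiniteDimensional ℂ ↥W :=
  FiniteDimensional.of_injective (W.subtype.restrictScalars ℂ) Subtype.val_injective

/-- The representation of `G` on a left ideal of its group algebra. -/
noncomputable def idealRep : Representation ℂ G ↥W where
  toFun g :=
    { toFun := fun w => ⟨MonoidAlgebra.single g 1 * w.1, by
        simpa [smul_eq_mul] using W.smul_mem (MonoidAlgebra.single g (1 : ℂ)) w.2⟩
      map_add' := by intro x y; apply Subtype.ext; simp [mul_add]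
      map_smul' := by intro c x; apply Subtype.ext; simp [Algebra.mul_smul_comm] }
  map_one' := by
    apply LinearMap.ext; intro w; apply Subtype.ext
    show MonoidAlgebra.single (1 : G) (1 : ℂ) * w.1 = w.1
    rw [← MonoidAlgebra.one_def, one_mul]
  map_mul' g h := by
    apply LinearMap.ext; intro w; apply Subtype.ext
    show MonoidAlgebra.single (g * h) (1 : ℂ) * w.1 = MonoidAlgebra.single g 1 * (MonoidAlgebra.single h 1 * w.1)
    rw [← mul_assoc, MonoidAlgebra.single_mul_single, mul_one]

theorem idealRep_apply (g : G) (w : ↥W) :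
    ((idealRep W g w : ↥W) : MonoidAlgebra ℂ G) = MonoidAlgebra.single g 1 * w.1 := rfl

end RegRep

section RegRep2
variable [Fintype G] (W : Submodule (MonoidAlgebra ℂ G) (MonoidAlgebra ℂ G))

theorem smul_eq_sum_idealRep (a : MonoidAlgebra ℂ G) (w : ↥W) :
    a • w = ∑ g ∈ a.coeff.support, a.coeff g • idealRep W g w := by
  apply Subtype.ext
  have h1 : ((a • w : ↥W) : MonoidAlgebra ℂ G) = a * w.1 := rfl
  rw [h1]
  have h2 : ((∑ g ∈ a.coeff.support, a.coeff g • idealRep W g w : ↥W) : MonoidAlgebra ℂ G)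
      = ∑ g ∈ a.coeff.support, a.coeff g • (MonoidAlgebra.single g 1 * w.1) := by
    rw [Submodule.coe_sum]
    apply Finset.sum_congr rfl
    intro g _
    rfl
  rw [h2]
  have h3 : a = ∑ g ∈ a.coeff.support, MonoidAlgebra.single g (a.coeff g) := (MonoidAlgebra.sum_coeff_single a).symm
  conv_lhs => rw [h3]
  rw [Finset.sum_mul]
  apply Finset.sum_congr rfl
  intro g _
  rw [← smul_mul_assoc]
  congr 1
  rw [MonoidAlgebra.smul_single]
  simp

theorem idealRep_simple (hW : IsSimpleModule (MonoidAlgebra ℂ G) ↥W) :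
    Simple (FDRep.of (idealRep W)) := by
  haveI := hW
  haveI : Nontrivial ↥W := IsSimpleModule.nontrivial (MonoidAlgebra ℂ G) ↥W
  apply simple_of_invariant
  intro p hp
  -- turn `p` into an `A`-submodule of `W`
  let q : Submodule (MonoidAlgebra ℂ G) ↥W :=
    { carrier := (p : Set ↥W)
      add_mem' := fun ha hb => p.add_mem ha hb
      zero_mem' := p.zero_mem
      smul_mem' := by
        intro a w hw
        rw [smul_eq_sum_idealRep]
        apply Submodule.sum_mem
        intro g _
        exact Submodule.smul_mem _ _ (hp g w hw) }
  rcases eq_bot_or_eq_top q with hbot | htop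
  · left
    rw [Submodule.eq_bot_iff] at hbot ⊢
    exact fun x hx => hbot x hx
  · right
    rw [Submodule.eq_top_iff'] at htop ⊢
    exact htop
end RegRep2


theorem classfun_orthogonal_eq_zero [Fintype G] (f : G → ℂ)
    (hclass : ∀ h x : G, f (h * x * h⁻¹) = f x)
    (hortho : ∀ V : FDRep ℂ G, Simple V → (∑ x : G, f x * V.character x) = 0)
    (x₀ : G) : f x₀ = 0 := by
  classical
  let z : MonoidAlgebra ℂ G := ∑ y : G, MonoidAlgebra.single y (f y)
  have hcoeff : ∀ y : G, z.coeff y = f y := by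
    intro y
    show (∑ x : G, MonoidAlgebra.single x (f x)).coeff y = f y
    rw [MonoidAlgebra.coeff_sum, Finset.sum_apply']
    simp [MonoidAlgebra.coeff_single, Finsupp.single_apply]
  suffices hz : z = 0 by
    rw [← hcoeff x₀, hz]
    rfl
  have hsingle : ∀ (g : G) (c : ℂ),
      z * MonoidAlgebra.single g c = MonoidAlgebra.single g c * z := by
    intro g c
    show (∑ y : G, MonoidAlgebra.single y (f y)) * _ = _ * (∑ y : G, MonoidAlgebra.single y (f y))
    rw [Finset.sum_mul, Finset.mul_sum]
    refine Fintype.sum_equiv (MulAut.conj g⁻¹).toEquiv _ _ ?_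
    intro y
    have hy : ((MulAut.conj g⁻¹).toEquiv y) = g⁻¹ * y * g := by
      show g⁻¹ * y * g⁻¹⁻¹ = g⁻¹ * y * g
      rw [inv_inv]
    rw [hy]
    have hf : f (g⁻¹ * y * g) = f y := by
      have := hclass g⁻¹ y
      rwa [inv_inv] at this
    rw [hf, MonoidAlgebra.single_mul_single, MonoidAlgebra.single_mul_single]
    have he : y * g = g * (g⁻¹ * y * g) := by group
    rw [he, mul_comm (f y) c]
  have hcentral : ∀ a : MonoidAlgebra ℂ G, z * a = a * z := by
    intro a
    induction a using MonoidAlgebra.induction_linear with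
    | zero => simp
    | add a b ha hb => rw [mul_add, add_mul, ha, hb]
    | single g c => exact hsingle g c
  haveI : NeZero ((Fintype.card G : ℂ)) := ⟨by exact_mod_cast Fintype.card_ne_zero⟩
  let R : MonoidAlgebra ℂ G →ₗ[MonoidAlgebra ℂ G] MonoidAlgebra ℂ G :=
    { toFun := fun a => a * z
      map_add' := fun a b => add_mul a b z
      map_smul' := fun r a => by
        show (r • a) * z = r • (a * z)
        rw [smul_eq_mul, smul_eq_mul, mul_assoc] }
  have hWker : ∀ W : Submodule (MonoidAlgebra ℂ G) (MonoidAlgebra ℂ G),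
      IsSimpleModule (MonoidAlgebra ℂ G) ↥W → W ≤ LinearMap.ker R := by
    intro W hsimp
    haveI := hsimp
    haveI : Nontrivial ↥W := IsSimpleModule.nontrivial (MonoidAlgebra ℂ G) ↥W
    let T : ↥W →ₗ[ℂ] ↥W := ∑ x : G, f x • (idealRep W x : ↥W →ₗ[ℂ] ↥W)
    have hT : ∀ w : ↥W, ((T w : ↥W) : MonoidAlgebra ℂ G) = z * w.1 := by
      intro w
      show ((∑ x : G, f x • (idealRep W x : ↥W →ₗ[ℂ] ↥W)) w : MonoidAlgebra ℂ G) = z * w.1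
      rw [LinearMap.sum_apply, Submodule.coe_sum]
      show _ = (∑ y : G, MonoidAlgebra.single y (f y)) * w.1
      rw [Finset.sum_mul]
      apply Finset.sum_congr rfl
      intro x _
      show ((f x • idealRep W x w : ↥W) : MonoidAlgebra ℂ G) = _
      have hcoe : ((f x • idealRep W x w : ↥W) : MonoidAlgebra ℂ G)
          = f x • ((idealRep W x w : ↥W) : MonoidAlgebra ℂ G) := rfl
      rw [hcoe, idealRep_apply, ← smul_mul_assoc]
      congr 1
      rw [MonoidAlgebra.smul_single]
      simp
    have htrace : LinearMap.trace ℂ ↥W T = 0 := by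
      have hs := hortho (FDRep.of (idealRep W)) (idealRep_simple W hsimp)
      rw [← hs, map_sum]
      apply Finset.sum_congr rfl
      intro x _
      rw [map_smul, smul_eq_mul]
      rfl
    obtain ⟨μ, hμ⟩ := Module.End.exists_eigenvalue T
    obtain ⟨v₀, hv₀⟩ := hμ.exists_hasEigenvector
    let E : Submodule (MonoidAlgebra ℂ G) ↥W :=
      { carrier := {w : ↥W | T w = μ • w}
        add_mem' := by
          intro a b ha hb
          show T (a + b) = μ • (a + b)
          rw [map_add, ha, hb, smul_add]
        zero_mem' := by
          show T 0 = μ • (0 : ↥W)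
          simp
        smul_mem' := by
          intro a w hw
          have hw' : T w = μ • w := hw
          show T (a • w) = μ • (a • w)
          apply Subtype.ext
          have h1 : ((T (a • w) : ↥W) : MonoidAlgebra ℂ G) = z * (a * w.1) := hT _
          rw [h1, ← mul_assoc, hcentral a, mul_assoc]
          have h2 : z * (w.1 : MonoidAlgebra ℂ G) = ((T w : ↥W) : MonoidAlgebra ℂ G) := (hT w).symm
          rw [h2, hw']
          show a * (μ • (w.1 : MonoidAlgebra ℂ G)) = ((μ • (a • w) : ↥W) : MonoidAlgebra ℂ G)
          rw [Algebra.mul_smul_comm]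
          rfl }
    have hE : E = ⊤ := by
      rcases eq_bot_or_eq_top E with hb | ht
      · exfalso
        have hv : v₀ ∈ E := Module.End.mem_eigenspace_iff.mp hv₀.1
        rw [hb, Submodule.mem_bot] at hv
        exact hv₀.2 hv
      · exact ht
    have hTall : ∀ w : ↥W, T w = μ • w := by
      intro w
      have : w ∈ E := hE ▸ Submodule.mem_top
      exact this
    have hμ0 : μ = 0 := by
      have hTid : T = μ • (LinearMap.id : ↥W →ₗ[ℂ] ↥W) := by
        apply LinearMap.ext
        intro w
        rw [hTall w]
        rfl
      rw [hTid, map_smul, LinearMap.trace_id, smul_eq_mul] at htrace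
      have hfr : (finrank ℂ ↥W : ℂ) ≠ 0 := by
        have : 0 < finrank ℂ ↥W := finrank_pos
        exact_mod_cast this.ne'
      exact (mul_eq_zero.mp htrace).resolve_right hfr
    intro w hw
    rw [LinearMap.mem_ker]
    show w * z = 0
    rw [← hcentral w]
    have h5 := hT ⟨w, hw⟩
    rw [hTall ⟨w, hw⟩, hμ0] at h5
    simp at h5
    rw [← h5]
  have htop : (⊤ : Submodule (MonoidAlgebra ℂ G) (MonoidAlgebra ℂ G)) ≤ LinearMap.ker R := by
    rw [← IsSemisimpleModule.sSup_simples_eq_top (MonoidAlgebra ℂ G) (MonoidAlgebra ℂ G)]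
    apply sSup_le
    intro W hWs
    exact hWker W hWs
  have h1 : R 1 = 0 := LinearMap.mem_ker.mp (htop Submodule.mem_top)
  have h2 : z = R 1 := (one_mul z).symm
  rw [h2, h1]

end Aux


/-- A finite nonabelian group `G` is a Camina group iff every nonlinear irreducible
complex character of `G` vanishes on `G \ G'`. -/
theorem camina_iff_nonlinear_irr_vanish (G : Type) [Group G] [Fintype G]
    (hna : ¬ ∀ a b : G, a * b = b * a) :
    IsCamina G ↔
      ∀ (V : FDRep ℂ G), Simple V → Module.finrank ℂ V ≠ 1 →
        ∀ g : G, g ∉ commutator G → V.character g = 0 := by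
  constructor
  · rintro ⟨_, hC⟩ V hs hd g hg
    haveI := hs
    exact forward_vanish hC V hd g hg
  · intro H
    refine ⟨hna, ?_⟩
    intro g hg
    classical
    haveI : Fintype ↥(commutator G) := Fintype.ofFinite _
    haveI hNorm : (commutator G).Normal := by rw [commutator_def]; infer_instance
    have hGmem : ∀ {a b : G}, a⁻¹ * b * a * b⁻¹ ∈ commutator G := by
      intro a b
      have h1 : ⁅a⁻¹, b⁆ ∈ ⁅(⊤ : Subgroup G), ⊤⁆ :=
        Subgroup.commutator_mem_commutator (Subgroup.mem_top _) (Subgroup.mem_top _)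
      rw [commutator_def]
      simpa [commutatorElement_def, mul_assoc] using h1
    ext x
    simp only [Set.mem_setOf_eq, Set.mem_image]
    constructor
    · intro hconj
      obtain ⟨h, hh⟩ := isConj_iff.mp hconj
      refine ⟨g⁻¹ * (h * g * h⁻¹), ?_, ?_⟩
      · have := hGmem (a := g) (b := h)
        simpa [mul_assoc] using this
      · rw [← hh]
        group
    · rintro ⟨c, hc, rfl⟩
      set N := commutator G with hN
      set S := Finset.univ.filter (fun x : G => IsConj g x) with hS
      have hg_mem_S : g ∈ S := by
        rw [hS, Finset.mem_filter]
        exact ⟨Finset.mem_univ g, IsConj.refl g⟩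
      have hScard : (S.card : ℂ) ≠ 0 := by
        have : 0 < S.card := Finset.card_pos.mpr ⟨g, hg_mem_S⟩
        exact_mod_cast this.ne'
      have hNcard : ((Fintype.card ↥N : ℂ)) ≠ 0 := by
        exact_mod_cast Fintype.card_ne_zero
      set r : ℂ := (S.card : ℂ) / (Fintype.card ↥N : ℂ) with hr
      set f : G → ℂ := fun x =>
        (if IsConj g x then 1 else 0) - r * (if g⁻¹ * x ∈ N then 1 else 0) with hf
      -- membership characterizations are conjugation invariant
      have hconj_iff : ∀ h x : G, IsConj g (h * x * h⁻¹) ↔ IsConj g x := by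
        intro h x
        constructor
        · intro h1
          exact h1.trans (isConj_iff.mpr ⟨h⁻¹, by group⟩)
        · intro h1
          exact h1.trans (isConj_iff.mpr ⟨h, rfl⟩)
      have hcoset_iff : ∀ h x : G, g⁻¹ * (h * x * h⁻¹) ∈ N ↔ g⁻¹ * x ∈ N := by
        intro h x
        constructor
        · intro h1
          have h2 : h * x⁻¹ * h⁻¹ * x ∈ N := by
            have := hGmem (a := h⁻¹) (b := x⁻¹)
            simpa [mul_assoc] using this
          have := N.mul_mem h1 h2
          have he : g⁻¹ * (h * x * h⁻¹) * (h * x⁻¹ * h⁻¹ * x) = g⁻¹ * x := by group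
          rwa [← he]
        · intro h1
          have h2 : x⁻¹ * h * x * h⁻¹ ∈ N := by
            have := hGmem (a := x) (b := h)
            simpa [mul_assoc] using this
          have := N.mul_mem h1 h2
          have he : g⁻¹ * x * (x⁻¹ * h * x * h⁻¹) = g⁻¹ * (h * x * h⁻¹) := by group
          rwa [← he]
      have hclass : ∀ h x : G, f (h * x * h⁻¹) = f x := by
        intro h x
        rw [hf]
        simp only
        rw [if_congr (hconj_iff h x) rfl rfl, if_congr (hcoset_iff h x) rfl rfl]
      -- elements of the class or the coset are outside N
      have hout_class : ∀ x : G, IsConj g x → x ∉ N := by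
        intro x hx hxN
        obtain ⟨h, hh⟩ := isConj_iff.mp hx
        apply hg
        have : g = h⁻¹ * x * h := by rw [← hh]; group
        rw [this]
        have := hNorm.conj_mem x hxN h⁻¹
        simpa [mul_assoc] using this
      have hout_coset : ∀ x : G, g⁻¹ * x ∈ N → x ∉ N := by
        intro x hx hxN
        apply hg
        have : g⁻¹ = (g⁻¹ * x) * x⁻¹ := by group
        have h2 : g⁻¹ ∈ N := by rw [this]; exact N.mul_mem hx (N.inv_mem hxN)
        simpa using N.inv_mem h2
      -- orthogonality hypothesis
      have hortho : ∀ V : FDRep ℂ G, Simple V → (∑ x : G, f x * V.character x) = 0 := by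
        intro V hs
        haveI := hs
        by_cases hd : finrank ℂ V = 1
        · -- linear character : constant value χ g on class and coset
          have hval : ∀ x : G, f x * V.character x =
              (if IsConj g x then V.character g else 0)
              - r * (if g⁻¹ * x ∈ N then V.character g else 0) := by
            intro x
            rw [hf]
            simp only
            by_cases h1 : IsConj g x
            · have hx1 : V.character x = V.character g := by
                obtain ⟨h, hh⟩ := isConj_iff.mp h1
                rw [← hh, FDRep.char_conj]
              by_cases h2 : g⁻¹ * x ∈ N
              · rw [if_pos h1, if_pos h2, if_pos h1, if_pos h2, hx1]; ring
              · rw [if_pos h1, if_neg h2, if_pos h1, if_neg h2, hx1]; ring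
            · by_cases h2 : g⁻¹ * x ∈ N
              · have hx1 : V.character x = V.character g := by
                  have hxe : x = g * (g⁻¹ * x) := by group
                  rw [hxe, char_linear_mul V hd, char_linear_commutator V hd _ h2, mul_one]
                rw [if_neg h1, if_pos h2, if_neg h1, if_pos h2, hx1]; ring
              · rw [if_neg h1, if_neg h2, if_neg h1, if_neg h2]; ring
          rw [Finset.sum_congr rfl (fun x _ => hval x), Finset.sum_sub_distrib]
          have hsum1 : ∑ x : G, (if IsConj g x then V.character g else 0)
              = (S.card : ℂ) * V.character g := by
            rw [← Finset.sum_filter, Finset.sum_const, nsmul_eq_mul]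
          have hcosetcard : (Finset.univ.filter (fun x : G => g⁻¹ * x ∈ N)).card
              = Fintype.card ↥N := by
            rw [← Fintype.card_subtype]
            apply Fintype.card_congr
            exact
              { toFun := fun x => ⟨g⁻¹ * (x : G), x.2⟩
                invFun := fun c => ⟨g * (c : G), by simp⟩
                left_inv := fun x => by apply Subtype.ext; simp
                right_inv := fun c => by apply Subtype.ext; simp }
          have hsum2 : ∑ x : G, r * (if g⁻¹ * x ∈ N then V.character g else 0)
              = (S.card : ℂ) * V.character g := by
            rw [← Finset.mul_sum, ← Finset.sum_filter, Finset.sum_const, nsmul_eq_mul,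
              hcosetcard, hr]
            field_simp
          rw [hsum1, hsum2, sub_self]
        · -- nonlinear : character vanishes off N
          apply Finset.sum_eq_zero
          intro x _
          by_cases hxN : x ∈ N
          · have h1 : ¬ IsConj g x := fun h => hout_class x h hxN
            have h2 : ¬ (g⁻¹ * x ∈ N) := fun h => hout_coset x h hxN
            rw [hf]
            simp only
            rw [if_neg h1, if_neg h2]
            ring
          · rw [H V hs hd x hxN, mul_zero]
      -- apply completeness
      have hf0 := classfun_orthogonal_eq_zero f hclass hortho (g * c)
      rw [hf] at hf0
      simp only at hf0
      have hc2 : g⁻¹ * (g * c) ∈ N := by simpa using hc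
      rw [if_pos hc2, mul_one, sub_eq_zero] at hf0
      by_contra hnc
      rw [if_neg hnc] at hf0
      have : (S.card : ℂ) = 0 := by
        rw [hr] at hf0
        field_simp at hf0
        simpa using hf0.symm
      exact hScard this
end

section
/- Let P be a finite p-group acting on a nontrivial finite group Q of order coprime to p, such that C_P(x) ≤ P' for every nontrivial x ∈ Q. If P is abelian, then the action is Frobenius (every nontrivial element of P acts without nontrivial fixed points) and P is cyclic. -/
open Pointwise

open Finset

lemma zmod_val_sum {p : ℕ} [NeZero p] {M : Type*} [AddCommMonoid M] (g : ℕ → M) :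
    ∑ i : ZMod p, g (ZMod.val i) = ∑ t ∈ range p, g t := by
  refine Finset.sum_nbij' (i := fun i => ZMod.val i) (j := fun t => (t : ZMod p))
    (fun i _ => mem_range.mpr (ZMod.val_lt i)) (fun t _ => mem_univ _)
    (fun i _ => by simp [ZMod.natCast_val, ZMod.cast_id'])
    (fun t ht => ZMod.val_natCast_of_lt (mem_range.mp ht))
    (fun i _ => rfl)

lemma myNorm_zero {P : Type*} [Group P] {M : Type*} [AddCommGroup M]
    (e : P →* AddMonoid.End M)
    (hfree : ∀ c : P, c ≠ 1 → ∀ x : M, e c x = x → x = 0)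
    {p : ℕ} {c : P} (hc1 : c ≠ 1) (hcp : c ^ p = 1) :
    (∑ t ∈ range p, (e c) ^ t) = 0 := by
  set N : AddMonoid.End M := ∑ t ∈ range p, (e c) ^ t with hN
  have key : (e c - 1) * N = 0 := by
    have hco : Commute (e c - 1) N := by
      apply Commute.sub_left
      · exact Commute.sum_right _ _ _ (fun i _ => Commute.pow_right rfl i)
      · exact Commute.sum_right _ _ _ (fun i _ => Commute.one_left _)
    rw [hco.eq, hN, geom_sum_mul, ← map_pow, hcp, map_one, sub_self]
  refine AddMonoidHom.ext fun x => ?_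
  have h1 : (e c - 1) (N x) = 0 := by
    have := congrArg (fun f : AddMonoid.End M => f x) key
    simpa using this
  have h2 : e c (N x) - N x = 0 := h1
  have h3 : e c (N x) = N x := by rwa [sub_eq_zero] at h2
  by_cases hx : N x = 0
  · exact hx
  · exact hfree c hc1 (N x) h3

lemma core_pkill {p : ℕ} (hp : p.Prime) {P : Type*} [Group P] {M : Type*} [AddCommGroup M]
    (e : P →* AddMonoid.End M)
    (hfree : ∀ c : P, c ≠ 1 → ∀ x : M, e c x = x → x = 0)
    (a b : P) (hcomm : Commute a b) (ha : a ^ p = 1) (hb : b ^ p = 1)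
    (hne : ∀ i j : ℕ, i < p → j < p → (i ≠ 0 ∨ j ≠ 0) → a ^ i * b ^ j ≠ 1)
    (x : M) : p • x = 0 := by
  haveI : Fact p.Prime := ⟨hp⟩
  haveI : NeZero p := ⟨hp.pos.ne'⟩
  have hbmod : ∀ m : ℕ, b ^ (m % p) = b ^ m := by
    intro m
    conv_rhs => rw [← Nat.div_add_mod m p]
    rw [pow_add, pow_mul, hb, one_pow, one_mul]
  have ha1 : a ≠ 1 := by
    intro h
    exact hne 1 0 hp.one_lt hp.pos (Or.inl one_ne_zero) (by simp [h])
  have hb1 : b ≠ 1 := by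
    intro h
    exact hne 0 1 hp.pos hp.one_lt (Or.inr one_ne_zero) (by simp [h])
  have hNa : (∑ t ∈ range p, (e a) ^ t) = 0 := myNorm_zero e hfree ha1 ha
  have hNb : (∑ t ∈ range p, (e b) ^ t) = 0 := myNorm_zero e hfree hb1 hb
  -- the full sum S
  set S : AddMonoid.End M := ∑ i : ZMod p, ∑ j : ZMod p, e (a ^ i.val * b ^ j.val) with hS
  -- first computation : S = 0
  have hS0 : S = 0 := by
    have e1 : ∀ i : ZMod p, (∑ j : ZMod p, e (a ^ i.val * b ^ j.val))
        = ∑ t ∈ range p, (e a) ^ i.val * (e b) ^ t := by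
      intro i
      rw [← zmod_val_sum (fun t => (e a) ^ i.val * (e b) ^ t)]
      exact Finset.sum_congr rfl fun j _ => by rw [map_mul, map_pow, map_pow]
    calc S = ∑ i : ZMod p, ∑ t ∈ range p, (e a) ^ i.val * (e b) ^ t :=
        Finset.sum_congr rfl (fun i _ => e1 i)
      _ = ∑ i ∈ range p, ∑ t ∈ range p, (e a) ^ i * (e b) ^ t :=
        zmod_val_sum (fun s => ∑ t ∈ range p, (e a) ^ s * (e b) ^ t)
      _ = 0 := by rw [← Finset.sum_mul_sum, hNa, zero_mul]
  -- second computation : S = -(p • 1)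
  have hS1 : S = -(p • (1 : AddMonoid.End M)) := by
    rw [hS, ← Finset.add_sum_erase _ _ (mem_univ (0 : ZMod p))]
    have h0 : (∑ j : ZMod p, e (a ^ (0 : ZMod p).val * b ^ j.val)) = 0 := by
      have h0' : (∑ j : ZMod p, e (a ^ (0 : ZMod p).val * b ^ j.val))
          = ∑ j : ZMod p, (e b) ^ j.val :=
        Finset.sum_congr rfl fun j _ => by simp [map_pow]
      rw [h0', zmod_val_sum (fun t => (e b) ^ t), hNb]
    rw [h0, zero_add]
    have hcj1 : ∀ j : ZMod p, a * b ^ j.val ≠ 1 := by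
      intro j h
      exact hne 1 j.val hp.one_lt (ZMod.val_lt j) (Or.inl one_ne_zero) (by simpa using h)
    have hcjp : ∀ j : ZMod p, (a * b ^ j.val) ^ p = 1 := by
      intro j
      rw [(hcomm.pow_right j.val).mul_pow, ha, one_mul, ← pow_mul,
        Nat.mul_comm, pow_mul, hb, one_pow]
    have hre : ∀ i ∈ univ.erase (0 : ZMod p), (∑ j : ZMod p, e (a ^ i.val * b ^ j.val))
        = ∑ j : ZMod p, (e (a * b ^ j.val)) ^ i.val := by
      intro i hi
      have hi0 : i ≠ 0 := (Finset.mem_erase.mp hi).1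
      rw [← Equiv.sum_comp (Equiv.mulLeft₀ i hi0) (fun j => e (a ^ i.val * b ^ j.val))]
      refine Finset.sum_congr rfl fun j _ => ?_
      rw [← map_pow]
      congr 1
      have h1 : (Equiv.mulLeft₀ i hi0 j).val = (i.val * j.val) % p := by
        simp [Equiv.mulLeft₀, ZMod.val_mul]
      rw [h1, hbmod, (hcomm.pow_right j.val).mul_pow, ← pow_mul, Nat.mul_comm j.val i.val]
    rw [Finset.sum_congr rfl hre, Finset.sum_comm]
    have hinner : ∀ j : ZMod p,
        (∑ i ∈ univ.erase (0 : ZMod p), (e (a * b ^ j.val)) ^ i.val) = -1 := by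
      intro j
      have hfull : (∑ i : ZMod p, (e (a * b ^ j.val)) ^ i.val) = 0 := by
        rw [zmod_val_sum (fun t => (e (a * b ^ j.val)) ^ t)]
        exact myNorm_zero e hfree (hcj1 j) (hcjp j)
      have := Finset.add_sum_erase univ (fun i : ZMod p => (e (a * b ^ j.val)) ^ i.val)
        (mem_univ (0 : ZMod p))
      rw [hfull] at this
      simp only [ZMod.val_zero, pow_zero] at this
      exact eq_neg_of_add_eq_zero_right this
    rw [Finset.sum_congr rfl (fun j _ => hinner j), Finset.sum_const, Finset.card_univ,
      ZMod.card]
    rw [eq_neg_iff_add_eq_zero, ← nsmul_add, neg_add_cancel, nsmul_zero]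
  rw [hS0] at hS1
  have hp1 : p • (1 : AddMonoid.End M) = 0 := neg_eq_zero.mp hS1.symm
  have := congrArg (fun f : AddMonoid.End M => f x) hp1
  simpa using this

lemma pkill (p : ℕ) [hpf : Fact p.Prime] (P Q : Type*) [Group P] [Group Q]
    [Finite P] [Finite Q] [MulDistribMulAction P Q]
    (hP : IsPGroup p P) (hQ : Nontrivial Q) (hcop : (Nat.card Q).Coprime p)
    (hfrob : ∀ g : P, g ≠ 1 → ∀ x : Q, g • x = x → x = 1)
    (a b : P) (hcomm : Commute a b) (ha : a ^ p = 1) (hb : b ^ p = 1)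
    (hne : ∀ i j : ℕ, i < p → j < p → (i ≠ 0 ∨ j ≠ 0) → a ^ i * b ^ j ≠ 1) :
    False := by
  have hp := hpf.out
  -- a prime q dividing |Q|
  obtain ⟨q, hq, hqdvd⟩ := Nat.exists_prime_and_dvd
    (n := Nat.card Q) (by have := Finite.one_lt_card_iff_nontrivial.mpr hQ; omega)
  haveI : Fact q.Prime := ⟨hq⟩
  -- a P-invariant Sylow q-subgroup
  have hnotdvd : ¬ p ∣ Nat.card (Sylow q Q) := by
    intro hdvd
    have h1 : Nat.card (Sylow q Q) ∣ Nat.card Q := by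
      obtain ⟨R⟩ : Nonempty (Sylow q Q) := inferInstance
      exact (Sylow.card_dvd_index R).trans (Subgroup.index_dvd_card _)
    have : p ∣ Nat.gcd (Nat.card Q) p := Nat.dvd_gcd (hdvd.trans h1) dvd_rfl
    rw [hcop] at this
    exact hp.one_lt.ne' (Nat.eq_one_of_dvd_one this)
  obtain ⟨R, hR⟩ := hP.nonempty_fixed_point_of_prime_not_dvd_card (Sylow q Q) hnotdvd
  have hRfix : ∀ g : P, g • R = R := fun g => hR g
  have hmem : ∀ (g : P) (x : Q), x ∈ (R : Subgroup Q) → g • x ∈ (R : Subgroup Q) := by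
    intro g x hx
    have h1 : g • x ∈ (g • (R : Subgroup Q)) := Subgroup.smul_mem_pointwise_smul x g _ hx
    rwa [← Sylow.pointwise_smul_def, hRfix g] at h1
  -- the invariant abelian subgroup A
  set A : Subgroup Q := (R : Subgroup Q) ⊓ Subgroup.centralizer (R : Subgroup Q) with hA
  have hAinv : ∀ (g : P) (x : Q), x ∈ A → g • x ∈ A := by
    intro g x hx
    obtain ⟨hx1, hx2⟩ := hx
    refine ⟨hmem g x hx1, Subgroup.mem_centralizer_iff.mpr fun y hy => ?_⟩
    have hz : g⁻¹ • y ∈ (R : Subgroup Q) := hmem g⁻¹ y hy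
    have hyz : y = g • (g⁻¹ • y) := (smul_inv_smul g y).symm
    rw [hyz, ← smul_mul', ← smul_mul',
      Subgroup.mem_centralizer_iff.mp hx2 (g⁻¹ • y) hz]
  have hAcomm : ∀ x ∈ A, ∀ y ∈ A, x * y = y * x := fun x hx y hy =>
    Subgroup.mem_centralizer_iff.mp hy.2 x hx.1
  -- a nontrivial element of A
  have hRcard : Nat.card (R : Subgroup Q) = q ^ (Nat.card Q).factorization q :=
    Sylow.card_eq_multiplicity R
  haveI : Nontrivial (R : Subgroup Q) := by
    rw [← Finite.one_lt_card_iff_nontrivial, hRcard]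
    exact Nat.one_lt_pow (Nat.Prime.factorization_pos_of_dvd hq Nat.card_pos.ne' hqdvd).ne'
      hq.one_lt
  haveI : Nontrivial (Subgroup.center (R : Subgroup Q)) :=
    (R.2 : IsPGroup q (R : Subgroup Q)).center_nontrivial
  obtain ⟨w, hw⟩ := exists_ne (1 : Subgroup.center (R : Subgroup Q))
  have hz1 : ((w : (R : Subgroup Q)) : Q) ≠ 1 := by
    intro h
    apply hw
    ext
    exact h
  have hzA : ((w : (R : Subgroup Q)) : Q) ∈ A := by
    refine ⟨(w : (R : Subgroup Q)).2, Subgroup.mem_centralizer_iff.mpr fun y hy => ?_⟩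
    have := Subgroup.mem_center_iff.mp w.2 ⟨y, hy⟩
    exact congrArg Subtype.val this
  -- commutative group structure on A
  letI : CommGroup A := { (inferInstance : Group A) with
    mul_comm := fun x y => Subtype.ext (hAcomm x.1 x.2 y.1 y.2) }
  -- P acts on Additive A by additive endomorphisms
  let e : P →* AddMonoid.End (Additive ↥A) :=
    { toFun := fun g =>
        { toFun := fun x => Additive.ofMul (⟨g • ((x.toMul : ↥A) : Q),
            hAinv g _ (x.toMul : ↥A).2⟩ : ↥A)
          map_zero' := Subtype.ext (smul_one g)
          map_add' := fun x y =>
            Subtype.ext (smul_mul' g ((x.toMul : ↥A) : Q) ((y.toMul : ↥A) : Q)) }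
      map_one' := AddMonoidHom.ext fun x =>
        Subtype.ext (one_smul P ((x.toMul : ↥A) : Q))
      map_mul' := fun g h => AddMonoidHom.ext fun x =>
        Subtype.ext (mul_smul g h ((x.toMul : ↥A) : Q)) }
  have hfree : ∀ c : P, c ≠ 1 → ∀ x : Additive ↥A, e c x = x → x = 0 := by
    intro c hc x hx
    have h1 : c • ((x.toMul : ↥A) : Q) = ((x.toMul : ↥A) : Q) :=
      congrArg (fun y : Additive ↥A => ((y.toMul : ↥A) : Q)) hx
    have h2 : ((x.toMul : ↥A) : Q) = 1 := hfrob c hc _ h1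
    exact congrArg Additive.ofMul (Subtype.ext h2)
  have hkill := core_pkill hp e hfree a b hcomm ha hb hne
    (Additive.ofMul (⟨_, hzA⟩ : ↥A))
  -- deduce z ^ p = 1
  have hzp : ((w : (R : Subgroup Q)) : Q) ^ p = 1 := by
    have := congrArg (fun y : Additive ↥A => ((y.toMul : ↥A) : Q)) hkill
    simpa [toMul_nsmul] using this
  have hdvd1 : orderOf ((w : (R : Subgroup Q)) : Q) ∣ p := orderOf_dvd_of_pow_eq_one hzp
  have hdvd2 : orderOf ((w : (R : Subgroup Q)) : Q) ∣ Nat.card Q := orderOf_dvd_natCard _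
  have : orderOf ((w : (R : Subgroup Q)) : Q) ∣ 1 := by
    rw [← hcop]
    exact Nat.dvd_gcd hdvd2 hdvd1
  exact hz1 (orderOf_eq_one_iff.mp (Nat.eq_one_of_dvd_one this))


lemma cyclic_of_key (p : ℕ) (hp : p.Prime) (P : Type*) [Group P] [Finite P]
    (hP : IsPGroup p P) (hab : ∀ a b : P, a * b = b * a)
    (hkey : ∀ g h : P, g ≠ 1 → g ^ p = 1 → h ^ p = 1 → h ∈ Subgroup.zpowers g) :
    IsCyclic P := by
  classical
  haveI : Fintype P := Fintype.ofFinite P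
  -- the p-torsion has at most p elements
  have hS1 : (univ.filter fun x : P => x ^ p = 1).card ≤ p := by
    by_cases hex : ∃ g : P, g ≠ 1 ∧ g ^ p = 1
    · obtain ⟨g, hg1, hgp⟩ := hex
      have hsub : ∀ x ∈ univ.filter fun x : P => x ^ p = 1, x ∈ Subgroup.zpowers g := by
        intro x hx
        exact hkey g x hg1 hgp (mem_filter.mp hx).2
      calc (univ.filter fun x : P => x ^ p = 1).card
          ≤ Fintype.card (Subgroup.zpowers g) := by
            refine Finset.card_le_card_of_injOn (fun x => if hx : x ∈ Subgroup.zpowers g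
              then (⟨x, hx⟩ : Subgroup.zpowers g) else 1) (fun x _ => mem_univ _) ?_
            intro x hx y hy hxy
            simp only at hxy
            rw [dif_pos (hsub x (Finset.mem_coe.mp hx)),
              dif_pos (hsub y (Finset.mem_coe.mp hy))] at hxy
            exact congrArg Subtype.val hxy
        _ = orderOf g := by rw [← Nat.card_eq_fintype_card, Nat.card_zpowers]
        _ ≤ p := Nat.le_of_dvd hp.pos (orderOf_dvd_of_pow_eq_one hgp)
    · push_neg at hex
      have : (univ.filter fun x : P => x ^ p = 1) ⊆ {1} := by
        intro x hx
        rcases eq_or_ne x 1 with h | h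
        · simp [h]
        · exact absurd (mem_filter.mp hx).2 (hex x h)
      calc _ ≤ ({1} : Finset P).card := Finset.card_le_card this
        _ ≤ p := by simpa using hp.one_lt.le
  -- the p^k torsion has at most p^k elements
  have hSk : ∀ k : ℕ, (univ.filter fun x : P => x ^ (p ^ k) = 1).card ≤ p ^ k := by
    intro k
    induction k with
    | zero =>
      have h0 : (univ.filter fun x : P => x ^ (p ^ 0) = 1) ⊆ {1} := by
        intro x hx
        simpa using (mem_filter.mp hx).2
      simpa using Finset.card_le_card h0
    | succ k ih =>
      have himage : (univ.filter fun x : P => x ^ (p ^ (k+1)) = 1).image (fun x => x ^ p)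
          ⊆ univ.filter fun x : P => x ^ (p ^ k) = 1 := by
        intro y hy
        obtain ⟨x, hx, rfl⟩ := Finset.mem_image.mp hy
        refine mem_filter.mpr ⟨mem_univ _, ?_⟩
        rw [← pow_mul, ← pow_succ']
        exact (mem_filter.mp hx).2
      have hfib : ∀ y ∈ (univ.filter fun x : P => x ^ (p ^ (k+1)) = 1).image (fun x => x ^ p),
          ((univ.filter fun x : P => x ^ (p ^ (k+1)) = 1).filter
            fun x => x ^ p = y).card ≤ p := by
        intro y hy
        obtain ⟨x₀, _, hx₀⟩ := Finset.mem_image.mp hy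
        refine le_trans ?_ hS1
        refine Finset.card_le_card_of_injOn (fun x => x * x₀⁻¹) ?_ ?_
        · intro x hx
          obtain ⟨hx1, hx2⟩ := mem_filter.mp hx
          refine mem_filter.mpr ⟨mem_univ _, ?_⟩
          have hc : Commute x x₀⁻¹ := hab x x₀⁻¹
          rw [hc.mul_pow, inv_pow, hx2, hx₀, mul_inv_cancel]
        · intro x _ y _ h
          exact mul_right_cancel h
      calc (univ.filter fun x : P => x ^ (p ^ (k+1)) = 1).card
          ≤ p * ((univ.filter fun x : P => x ^ (p ^ (k+1)) = 1).image (fun x => x ^ p)).card :=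
            Finset.card_le_mul_card_image _ p hfib
        _ ≤ p * (univ.filter fun x : P => x ^ (p ^ k) = 1).card :=
            Nat.mul_le_mul_left p (Finset.card_le_card himage)
        _ ≤ p * p ^ k := Nat.mul_le_mul_left p ih
        _ = p ^ (k+1) := (pow_succ' p k).symm
  -- conclude
  refine isCyclic_of_card_pow_eq_one_le ?_
  intro n hn
  set k := n.factorization p with hk
  have hsub : (univ.filter fun a : P => a ^ n = 1) ⊆ (univ.filter fun x : P => x ^ (p ^ k) = 1) := by
    intro x hx
    have hx' : x ^ n = 1 := (mem_filter.mp hx).2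
    obtain ⟨k0, hk0⟩ := hP x
    obtain ⟨m, hm, hord⟩ := (Nat.dvd_prime_pow hp).mp (orderOf_dvd_of_pow_eq_one hk0)
    have h1 : p ^ m ∣ n := hord ▸ orderOf_dvd_of_pow_eq_one hx'
    have h2 : m ≤ k := (Nat.Prime.pow_dvd_iff_le_factorization hp hn.ne').mp h1
    refine mem_filter.mpr ⟨mem_univ _, ?_⟩
    exact orderOf_dvd_iff_pow_eq_one.mp (hord ▸ pow_dvd_pow p h2)
  calc _ ≤ p ^ k := le_trans (Finset.card_le_card hsub) (hSk k)
    _ ≤ n := Nat.le_of_dvd hn (Nat.ordProj_dvd n p)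

/-- If an abelian finite `p`-group `P` acts on a nontrivial finite `p'`-group `Q`
with `C_P(x) ≤ P'` for all nontrivial `x ∈ Q`, then the action is Frobenius and
`P` is cyclic. -/
theorem abelian_pGroup_action (p : ℕ) [Fact p.Prime] (P Q : Type*) [Group P] [Group Q]
    [Finite P] [Finite Q] [MulDistribMulAction P Q]
    (hP : IsPGroup p P) (hab : ∀ a b : P, a * b = b * a)
    (hQ : Nontrivial Q) (hcop : (Nat.card Q).Coprime p)
    (hcent : ∀ x : Q, x ≠ 1 → MulAction.stabilizer P x ≤ commutator P) :
    (∀ g : P, g ≠ 1 → ∀ x : Q, g • x = x → x = 1) ∧ IsCyclic P := by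
  have hp := (inferInstance : Fact p.Prime).out
  have hbot : commutator P = ⊥ := by
    rw [commutator_def, Subgroup.commutator_eq_bot_iff_le_centralizer]
    intro g _
    exact Subgroup.mem_centralizer_iff.mpr fun h _ => hab h g
  have hfrob : ∀ g : P, g ≠ 1 → ∀ x : Q, g • x = x → x = 1 := by
    intro g hg x hx
    by_contra hx1
    have : g ∈ commutator P := hcent x hx1 hx
    rw [hbot] at this
    exact hg (Subgroup.mem_bot.mp this)
  refine ⟨hfrob, ?_⟩
  have hkey : ∀ g h : P, g ≠ 1 → g ^ p = 1 → h ^ p = 1 → h ∈ Subgroup.zpowers g := by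
    intro g h hg1 hgp hhp
    by_cases hh1 : h = 1
    · rw [hh1]; exact Subgroup.one_mem _
    by_contra hmem
    refine pkill p P Q hP hQ hcop hfrob g h (hab g h) hgp hhp ?_
    intro i j hi hj hij heq
    have hordg : orderOf g = p := orderOf_eq_prime hgp hg1
    have hordh : orderOf h = p := orderOf_eq_prime hhp hh1
    rcases Nat.eq_zero_or_pos j with hj0 | hj0
    · subst hj0
      rw [pow_zero, mul_one] at heq
      have hdvd : p ∣ i := hordg ▸ orderOf_dvd_of_pow_eq_one heq
      have hi0 : i = 0 := Nat.eq_zero_of_dvd_of_lt hdvd hi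
      rcases hij with h' | h'
      · exact h' hi0
      · exact h' rfl
    · have hcj : Nat.Coprime p j := (Nat.Prime.coprime_iff_not_dvd hp).mpr
        (fun hd => absurd (Nat.eq_zero_of_dvd_of_lt hd hj) hj0.ne')
      have hhj_mem : h ^ j ∈ Subgroup.zpowers g := by
        have h1 : h ^ j = (g ^ i)⁻¹ := eq_inv_of_mul_eq_one_left
          (by rw [← heq]; exact (hab _ _))
        rw [h1]
        exact Subgroup.inv_mem _ (Subgroup.pow_mem _ (Subgroup.mem_zpowers g) i)
      have hoj : orderOf (h ^ j) = p := by
        rw [orderOf_pow h, hordh, Nat.Coprime.gcd_eq_one hcj, Nat.div_one]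
      have hle : Subgroup.zpowers (h ^ j) ≤ Subgroup.zpowers h :=
        Subgroup.zpowers_le.mpr (Subgroup.pow_mem _ (Subgroup.mem_zpowers h) j)
      have heqz : Subgroup.zpowers (h ^ j) = Subgroup.zpowers h :=
        Subgroup.eq_of_le_of_card_ge hle
          (by rw [Nat.card_zpowers, Nat.card_zpowers, hordh, hoj])
      have : h ∈ Subgroup.zpowers (h ^ j) := heqz.symm ▸ Subgroup.mem_zpowers h
      exact hmem (Subgroup.zpowers_le.mpr hhj_mem this)
  exact cyclic_of_key p hp P hP hab hkey
end

section
/- Let P be a finite Camina p-group of nilpotence class 3 and let χ be a faithful irreducible character of P whose kernel does not contain Z(P). Then χ is fully ramified with respect to P/Z(P); in particular χ(1)² = |P : Z(P)|. -/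
open CategoryTheory
open scoped commutatorElement

/-- In a finite Camina `p`-group of class 3, a faithful irreducible (complex)
character whose kernel does not contain the center is fully ramified with respect to
`P/Z(P)`: its restriction to `Z(P)` is a multiple of a single linear character, and
`χ(1)² = |P : Z(P)|`. -/
theorem camina_class3_fully_ramified (p : ℕ) [Fact p.Prime]
    (P : Type) [Group P] [Fintype P]
    (hP : IsPGroup p P) (hCam : IsCamina P) [Group.IsNilpotent P]
    (h3 : Group.nilpotencyClass P = 3)
    (V : FDRep ℂ P) (hsimple : Simple V)
    (hfaith : ∀ g : P, (∀ v : V, V.ρ g v = v) → g = 1)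
    (hker : ¬ (Subgroup.center P : Set P) ⊆ {g : P | ∀ v : V, V.ρ g v = v}) :
    (∃ lam : Subgroup.center P →* ℂ,
        ∀ z : Subgroup.center P, V.character (z : P) = V.character 1 * lam z) ∧
      (V.character 1) ^ 2 = ((Subgroup.center P).index : ℂ) := by
  classical
  haveI := hsimple
  obtain ⟨hnab, hcam⟩ := hCam
  -- Schur: central elements act by scalars
  have schur : ∀ z : P, z ∈ Subgroup.center P →
      ∃ c : ℂ, V.ρ z = c • (LinearMap.id : V →ₗ[ℂ] V) := by
    intro z hz
    let f : V ⟶ V := ⟨FGModuleCat.ofHom (V.ρ z), by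
      intro g
      ext v
      show V.ρ z (V.ρ g v) = V.ρ g (V.ρ z v)
      simp only [← Module.End.mul_apply, ← map_mul, Subgroup.mem_center_iff.mp hz g]⟩
    obtain ⟨c, hc⟩ := CategoryTheory.endomorphism_simple_eq_smul_id ℂ f
    refine ⟨c, ?_⟩
    have := congrArg Action.Hom.hom hc
    have := congrArg (fun φ => φ.hom.hom) this
    rw [Action.smul_hom] at this
    exact this.symm
  have idne : (LinearMap.id : V →ₗ[ℂ] V) ≠ 0 := by
    intro h
    apply CategoryTheory.id_nonzero V
    apply Action.Hom.ext
    ext v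
    exact LinearMap.congr_fun h v
  have uniq : ∀ c c' : ℂ, c • (LinearMap.id : V →ₗ[ℂ] V) = c' • LinearMap.id → c = c' := by
    intro c c' h
    by_contra hne
    have h0 : (c - c') • (LinearMap.id : V →ₗ[ℂ] V) = 0 := by rw [sub_smul, h, sub_self]
    rcases smul_eq_zero.mp h0 with h' | h'
    · exact hne (sub_eq_zero.mp h')
    · exact idne h'
  set lam0 : Subgroup.center P → ℂ := fun z => Classical.choose (schur z z.2) with hlam0def
  have hlam0 : ∀ z : Subgroup.center P, V.ρ (z : P) = lam0 z • LinearMap.id :=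
    fun z => Classical.choose_spec (schur z z.2)
  have hρ_apply : ∀ (z : Subgroup.center P) (v : V), V.ρ (z : P) v = lam0 z • v := by
    intro z v; rw [hlam0 z]; simp
  have lam_one : lam0 1 = 1 := by
    apply uniq
    rw [← hlam0 1]
    simp [Module.End.one_eq_id]
  have lam_mul : ∀ z w : Subgroup.center P, lam0 (z * w) = lam0 z * lam0 w := by
    intro z w
    apply uniq
    rw [← hlam0 (z * w)]
    ext v
    simp [hρ_apply, mul_smul, Subgroup.coe_mul]
  have lam_eq_one : ∀ z : Subgroup.center P, lam0 z = 1 → z = 1 := by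
    intro z h
    refine Subtype.ext (hfaith _ fun v => ?_)
    rw [hρ_apply z v, h, one_smul]
  -- character values
  have char_mul_central : ∀ (g : P) (z : Subgroup.center P),
      V.character (g * (z : P)) = lam0 z * V.character g := by
    intro g z
    have hρ : V.ρ (g * (z : P)) = lam0 z • V.ρ g := by
      rw [map_mul, hlam0 z]
      ext v
      simp
    show LinearMap.trace ℂ V (V.ρ (g * (z : P))) = _
    rw [hρ, map_smul]
    rfl
  -- the key vanishing principle
  have key : ∀ g : P, (∃ z : Subgroup.center P, lam0 z ≠ 1 ∧ IsConj g (g * (z : P))) →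
      V.character g = 0 := by
    rintro g ⟨z, hne, hconj⟩
    obtain ⟨c, hc⟩ := isConj_iff.mp hconj
    have h1 : V.character (g * (z : P)) = lam0 z * V.character g := char_mul_central g z
    rw [← hc, FDRep.char_conj] at h1
    have h2 : (lam0 z - 1) * V.character g = 0 := by
      rw [sub_mul, one_mul, ← h1, sub_self]
    rcases mul_eq_zero.mp h2 with h' | h'
    · exact absurd (sub_eq_zero.mp h') hne
    · exact h'
  -- element witnessing nontriviality on the center
  obtain ⟨z0v, hz0mem, hz0not⟩ := Set.not_subset.mp hker
  have hz0lam : lam0 ⟨z0v, hz0mem⟩ ≠ 1 := by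
    intro h
    exact hz0not fun v => by rw [hρ_apply ⟨z0v, hz0mem⟩ v, h, one_smul]
  -- center is contained in the commutator subgroup
  have hZle : ∀ z : P, z ∈ Subgroup.center P → z ∈ commutator P := by
    intro z hz
    by_contra hzc
    have he := hcam z hzc
    push_neg at hnab
    obtain ⟨a, b, hab⟩ := hnab
    have hmem : z * ⁅a, b⁆ ∈ {x : P | IsConj z x} := by
      rw [he]
      exact ⟨⁅a, b⁆, Subgroup.commutator_mem_commutator (Subgroup.mem_top a) (Subgroup.mem_top b),
        rfl⟩
    obtain ⟨c, hc⟩ := isConj_iff.mp hmem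
    have hcz : c * z * c⁻¹ = z := by
      rw [Subgroup.mem_center_iff.mp hz c, mul_inv_cancel_right]
    rw [hcz] at hc
    have : ⁅a, b⁆ = 1 := by
      have := congrArg (fun x => z⁻¹ * x) hc.symm
      simpa using this
    exact hab (commutatorElement_eq_one_iff_mul_comm.mp this)
  -- second lower central series term is central
  have hlcs3 : lowerCentralSeries (⊤ : Subgroup P) 3 = ⊥ := by
    rw [← h3]; exact lowerCentralSeries_nilpotencyClass
  have hlcs2 : ∀ x : P, x ∈ lowerCentralSeries (⊤ : Subgroup P) 2 → x ∈ Subgroup.center P := by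
    intro x hx
    rw [Subgroup.mem_center_iff]
    intro y
    have hmem : ⁅x, y⁆ ∈ lowerCentralSeries (⊤ : Subgroup P) 3 :=
      Subgroup.commutator_mem_commutator hx (Subgroup.mem_top y)
    rw [hlcs3, Subgroup.mem_bot] at hmem
    exact (commutatorElement_eq_one_iff_mul_comm.mp hmem).symm
  -- χ vanishes off the center
  have hvanish : ∀ g : P, g ∉ Subgroup.center P → V.character g = 0 := by
    intro g hg
    by_cases hgc : g ∈ commutator P
    · -- g in commutator \ center
      have hginv : g⁻¹ ∉ Subgroup.center P := by
        intro h
        exact hg (by simpa using (Subgroup.center P).inv_mem h)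
      rw [Subgroup.mem_center_iff] at hginv
      push_neg at hginv
      obtain ⟨t, ht⟩ := hginv
      have hz2 : ⁅g⁻¹, t⁆ ∈ lowerCentralSeries (⊤ : Subgroup P) 2 := by
        refine Subgroup.commutator_mem_commutator ?_ (Subgroup.mem_top t)
        exact inv_mem hgc
      have hzc : ⁅g⁻¹, t⁆ ∈ Subgroup.center P := hlcs2 _ hz2
      have hzne : ⁅g⁻¹, t⁆ ≠ 1 := by
        intro h
        exact ht (commutatorElement_eq_one_iff_mul_comm.mp h).symm
      have hconj : IsConj g (g * ⁅g⁻¹, t⁆) := by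
        refine isConj_iff.mpr ⟨t, ?_⟩
        rw [commutatorElement_def]
        group
      refine key g ⟨⟨⁅g⁻¹, t⁆, hzc⟩, ?_, hconj⟩
      intro h
      exact hzne (congrArg Subtype.val (lam_eq_one _ h))
    · -- g outside the commutator: use the Camina condition
      have he := hcam g hgc
      have hconj : IsConj g (g * z0v) := by
        have : g * z0v ∈ {x : P | IsConj g x} := by
          rw [he]
          exact ⟨z0v, hZle _ hz0mem, rfl⟩
        exact this
      exact key g ⟨⟨z0v, hz0mem⟩, hz0lam, hconj⟩
  -- first conclusion
  have char_center : ∀ z : Subgroup.center P,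
      V.character (z : P) = V.character 1 * lam0 z := by
    intro z
    have := char_mul_central 1 z
    rw [one_mul] at this
    rw [this, mul_comm]
  refine ⟨⟨{ toFun := lam0, map_one' := lam_one, map_mul' := lam_mul }, char_center⟩, ?_⟩
  -- orthogonality
  letI : Fintype P := ‹Fintype P›
  have hcard : (Fintype.card P) = Fintype.card P :=
    Fintype.card_congr (Equiv.refl P)
  haveI : Invertible ((Nat.card P : ℂ)) := by
    refine invertibleOfNonzero ?_
    rw [Nat.card_eq_fintype_card]
    exact_mod_cast (Fintype.card_ne_zero : Fintype.card P ≠ 0)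
  have horth := FDRep.char_orthonormal (k := ℂ) (G := P) V V
  rw [if_pos ⟨Iso.refl V⟩] at horth
  rw [← invOf_eq_inv, invOf_mul_eq_iff_eq_mul_left] at horth
  have hsum : ∑ g : P, V.character g * V.character g⁻¹ = (Fintype.card P : ℂ) := by
    rw [← hcard]
    simpa [smul_eq_mul] using horth
  -- compute the sum using vanishing
  have hterm : ∀ g : P, g ∈ Subgroup.center P →
      V.character g * V.character g⁻¹ = (V.character 1) ^ 2 := by
    intro g hg
    have h1 : V.character g = V.character 1 * lam0 ⟨g, hg⟩ := char_center ⟨g, hg⟩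
    have h2 : V.character g⁻¹ = V.character 1 * lam0 ⟨g, hg⟩⁻¹ := char_center ⟨g, hg⟩⁻¹
    have hinv : lam0 ⟨g, hg⟩ * lam0 ⟨g, hg⟩⁻¹ = 1 := by
      rw [← lam_mul, mul_inv_cancel, lam_one]
    calc V.character g * V.character g⁻¹
        = (V.character 1) ^ 2 * (lam0 ⟨g, hg⟩ * lam0 ⟨g, hg⟩⁻¹) := by rw [h1, h2]; ring
      _ = (V.character 1) ^ 2 := by rw [hinv, mul_one]
  have hsplit : ∑ g : P, V.character g * V.character g⁻¹ =
      (Fintype.card (Subgroup.center P) : ℂ) * (V.character 1) ^ 2 := by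
    rw [← Finset.sum_filter_of_ne (p := fun g => g ∈ Subgroup.center P)
      (fun g _ hne => by
        by_contra hg
        exact hne (by rw [hvanish g hg, zero_mul]))]
    rw [Finset.sum_congr rfl (fun g hg => hterm g (Finset.mem_filter.mp hg).2)]
    rw [Finset.sum_const, nsmul_eq_mul]
    congr 1
    norm_cast
    exact (Fintype.card_subtype _).symm
  have hZcard : (Fintype.card (Subgroup.center P) : ℂ) ≠ 0 := by
    exact_mod_cast Fintype.card_ne_zero
  have hindex : (Fintype.card (Subgroup.center P)) * (Subgroup.center P).index
      = Fintype.card P := by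
    rw [← Nat.card_eq_fintype_card, ← Nat.card_eq_fintype_card]
    exact Subgroup.card_mul_index _
  apply mul_left_cancel₀ hZcard
  rw [← hsplit, hsum, ← hindex]
  push_cast
  ring
end
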